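/- Let b > 0, let k ∈ L¹(0,b) satisfy the generalized Sonine condition with associated kernel K ∈ L¹(0,b) and function g, and let f ∈ C¹[0,b]. If u ∈ L¹(0,b) satisfies ∫₀ᵗ k(t−s) u(s) ds = f(t) for almost all t ∈ (0,b), then u satisfies the second-kind Volterra integral equation u(t) + ∫₀ᵗ g'(t−y) u(y) dy = K(t) f(0) + ∫₀ᵗ K(t−s) f'(s) ds for almost all t ∈ (0,b). -/

import Mathlib

open MeasureTheory Set Filter intervalIntegral Topology
open scoped Convolution

namespace Stmt8Aux

noncomputable def cv (φ ψ : ℝ → ℝ) : ℝ → ℝ := φ ⋆[ContinuousLinearMap.mul ℝ ℝ, volume] ψ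

lemma cv_def (φ ψ : ℝ → ℝ) (t : ℝ) : cv φ ψ t = ∫ s, φ s * ψ (t - s) := rfl

lemma cv_comm (φ ψ : ℝ → ℝ) : cv φ ψ = cv ψ φ := by
  funext t
  rw [cv_def, cv_def]
  have h := MeasureTheory.integral_sub_left_eq_self (μ := volume)
      (fun s => ψ s * φ (t - s)) t
  rw [← h]
  congr 1; funext s
  simp [sub_sub_cancel, mul_comm]

lemma cv_def' (φ ψ : ℝ → ℝ) (t : ℝ) : cv φ ψ t = ∫ s, φ (t - s) * ψ s := by
  rw [cv_comm, cv_def]; congr 1; funext s; rw [mul_comm]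

lemma cv_zero_of_nonpos {φ ψ : ℝ → ℝ} (hφ : ∀ s ≤ (0:ℝ), φ s = 0)
    (hψ : ∀ s ≤ (0:ℝ), ψ s = 0) {t : ℝ} (ht : t ≤ 0) : cv φ ψ t = 0 := by
  rw [cv_def]
  have : ∀ s, φ s * ψ (t - s) = 0 := by
    intro s
    rcases le_or_gt s 0 with h | h
    · rw [hφ s h, zero_mul]
    · rw [hψ _ (by linarith), mul_zero]
  simp [this]

lemma ae_cea {φ ψ : ℝ → ℝ} (hφ : Integrable φ) (hψ : Integrable ψ) :
    ∀ᵐ t : ℝ, Integrable (fun s => φ s * ψ (t - s)) :=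
  hφ.ae_convolution_exists (L := ContinuousLinearMap.mul ℝ ℝ) hψ

lemma cv_integrable {φ ψ : ℝ → ℝ} (hφ : Integrable φ) (hψ : Integrable ψ) :
    Integrable (cv φ ψ) :=
  hφ.integrable_convolution (ContinuousLinearMap.mul ℝ ℝ) hψ

lemma cv_assoc {φ ψ ω : ℝ → ℝ} (hφ : Integrable φ) (hψ : Integrable ψ) (hω : Integrable ω) :
    ∀ᵐ t : ℝ, cv (cv φ ψ) ω t = cv φ (cv ψ ω) t := by
  have h1 : ∀ᵐ y : ℝ, ConvolutionExistsAt φ ψ y (ContinuousLinearMap.mul ℝ ℝ) volume :=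
    hφ.ae_convolution_exists (L := ContinuousLinearMap.mul ℝ ℝ) hψ
  have h2 : ∀ᵐ x : ℝ, ConvolutionExistsAt (fun x => ‖ψ x‖) (fun x => ‖ω x‖) x
      (ContinuousLinearMap.mul ℝ ℝ) volume :=
    hψ.norm.ae_convolution_exists (L := ContinuousLinearMap.mul ℝ ℝ) hω.norm
  have h3 := hφ.norm.ae_convolution_exists
    (L := ContinuousLinearMap.mul ℝ ℝ)
    (hψ.norm.integrable_convolution (ContinuousLinearMap.mul ℝ ℝ) hω.norm)
  filter_upwards [h3] with t ht
  exact convolution_assoc (ContinuousLinearMap.mul ℝ ℝ) (ContinuousLinearMap.mul ℝ ℝ)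
    (ContinuousLinearMap.mul ℝ ℝ) (ContinuousLinearMap.mul ℝ ℝ) (fun x y z => mul_assoc x y z)
    hφ.aestronglyMeasurable hψ.aestronglyMeasurable hω.aestronglyMeasurable h1 h2 ht

variable {b : ℝ}

lemma indicator_nonpos (φ : ℝ → ℝ) {s : ℝ} (hs : s ≤ 0) : (Ioo (0:ℝ) b).indicator φ s = 0 :=
  indicator_of_notMem (fun h => absurd h.1 (not_lt.mpr hs)) _

lemma cv_indicator_eq (φ ψ : ℝ → ℝ) {t : ℝ} (ht : t ∈ Ioc (0:ℝ) b) :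
    cv ((Ioo 0 b).indicator φ) ((Ioo 0 b).indicator ψ) t = ∫ s in (0:ℝ)..t, φ (t - s) * ψ s := by
  rw [cv_def']
  have hpt : ∀ s : ℝ, (Ioo (0:ℝ) b).indicator φ (t - s) * (Ioo (0:ℝ) b).indicator ψ s
      = (Ioo (0:ℝ) t).indicator (fun s => φ (t - s) * ψ s) s := by
    intro s
    by_cases hs : s ∈ Ioo (0:ℝ) t
    · rw [indicator_of_mem hs,
        indicator_of_mem (show t - s ∈ Ioo (0:ℝ) b from
          ⟨by linarith [hs.2], by linarith [hs.1, ht.2]⟩),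
        indicator_of_mem (show s ∈ Ioo (0:ℝ) b from ⟨hs.1, lt_of_lt_of_le hs.2 ht.2⟩)]
    · rw [indicator_of_notMem hs]
      rcases le_or_gt s 0 with h | h
      · rw [indicator_nonpos ψ h, mul_zero]
      · have hts : t ≤ s := by by_contra hc; exact hs ⟨h, lt_of_not_ge hc⟩
        rw [indicator_nonpos φ (by linarith : t - s ≤ 0), zero_mul]
  simp only [hpt]
  rw [MeasureTheory.integral_indicator measurableSet_Ioo,
    ← MeasureTheory.integral_Ioc_eq_integral_Ioo, ← intervalIntegral.integral_of_le ht.1.le]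

lemma cv_one_eq {ψ : ℝ → ℝ} (hψ : ∀ s ≤ (0:ℝ), ψ s = 0) {t : ℝ} (ht : t ∈ Ioc (0:ℝ) b) :
    cv ((Ioo 0 b).indicator (fun _ => 1)) ψ t = ∫ s in (0:ℝ)..t, ψ s := by
  rw [cv_def']
  have hpt : ∀ s : ℝ, (Ioo (0:ℝ) b).indicator (fun _ => (1:ℝ)) (t - s) * ψ s
      = (Ioo (0:ℝ) t).indicator ψ s := by
    intro s
    by_cases hs : s ∈ Ioo (0:ℝ) t
    · rw [indicator_of_mem hs,
        indicator_of_mem (show t - s ∈ Ioo (0:ℝ) b from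
          ⟨by linarith [hs.2], by linarith [hs.1, ht.2]⟩), one_mul]
    · rw [indicator_of_notMem hs]
      rcases le_or_gt s 0 with h | h
      · rw [hψ s h, mul_zero]
      · have hts : t ≤ s := by by_contra hc; exact hs ⟨h, lt_of_not_ge hc⟩
        rw [indicator_nonpos _ (by linarith : t - s ≤ 0), zero_mul]
  simp only [hpt]
  rw [MeasureTheory.integral_indicator measurableSet_Ioo,
    ← MeasureTheory.integral_Ioc_eq_integral_Ioo, ← intervalIntegral.integral_of_le ht.1.le]

end Stmt8Aux

open Stmt8Aux

/-- under the generalized Sonine condition and `f ∈ C¹[0,b]`, any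
`u ∈ L¹(0,b)` solving the first-kind equation a.e. also solves the second-kind
Volterra equation
`u t + ∫₀ᵗ g'(t-y) u(y) dy = K t · f 0 + ∫₀ᵗ K(t-s) f'(s) ds` a.e. on `(0,b)`. -/
theorem stmt8 (b : ℝ) (hb : 0 < b) (k K g f f' u : ℝ → ℝ)
    (hk : IntegrableOn k (Ioo 0 b))
    (hK : IntegrableOn K (Ioo 0 b))
    (hg_diff : Differentiable ℝ g)
    (hg' : IntegrableOn (deriv g) (Ioo 0 b))
    (hg0 : g 0 = 1)
    (hgsc : ∀ᵐ t : ℝ, t ∈ Ioo (0:ℝ) b → (∫ s in (0:ℝ)..t, K (t - s) * k s) = g t)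
    (hf : ∀ t ∈ Icc (0:ℝ) b, HasDerivAt f (f' t) t)
    (hf' : ContinuousOn f' (Icc 0 b))
    (hu : IntegrableOn u (Ioo 0 b))
    (heq : ∀ᵐ t : ℝ, t ∈ Ioo (0:ℝ) b → (∫ s in (0:ℝ)..t, k (t - s) * u s) = f t) :
    ∀ᵐ t : ℝ, t ∈ Ioo (0:ℝ) b →
      u t + (∫ y in (0:ℝ)..t, deriv g (t - y) * u y) =
        K t * f 0 + ∫ s in (0:ℝ)..t, K (t - s) * f' s := by
  have mI : MeasurableSet (Ioo (0:ℝ) b) := measurableSet_Ioo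
  set χ : ℝ → ℝ := (Ioo (0:ℝ) b).indicator (fun _ => 1) with hχdef
  set k0 : ℝ → ℝ := (Ioo (0:ℝ) b).indicator k with hk0def
  set K0 : ℝ → ℝ := (Ioo (0:ℝ) b).indicator K with hK0def
  set u0 : ℝ → ℝ := (Ioo (0:ℝ) b).indicator u with hu0def
  set h1 : ℝ → ℝ := (Ioo (0:ℝ) b).indicator (deriv g) with hh1def
  set w0 : ℝ → ℝ := (Ioo (0:ℝ) b).indicator f' with hw0def
  set g0 : ℝ → ℝ := (Ioo (0:ℝ) b).indicator g with hg0def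
  set f0 : ℝ → ℝ := (Ioo (0:ℝ) b).indicator f with hf0def
  -- integrability
  have hw' : IntegrableOn f' (Ioo 0 b) :=
    (hf'.integrableOn_Icc).mono_set Ioo_subset_Icc_self
  have hχi : Integrable χ := by
    rw [hχdef, integrable_indicator_iff mI]
    exact integrableOn_const measure_Ioo_lt_top.ne
  have hk0i : Integrable k0 := by rw [hk0def, integrable_indicator_iff mI]; exact hk
  have hK0i : Integrable K0 := by rw [hK0def, integrable_indicator_iff mI]; exact hK
  have hu0i : Integrable u0 := by rw [hu0def, integrable_indicator_iff mI]; exact hu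
  have hh1i : Integrable h1 := by rw [hh1def, integrable_indicator_iff mI]; exact hg'
  have hw0i : Integrable w0 := by rw [hw0def, integrable_indicator_iff mI]; exact hw'
  -- vanishing on nonpositive reals
  have hχz : ∀ s ≤ (0:ℝ), χ s = 0 := fun s hs => indicator_nonpos _ hs
  have hk0z : ∀ s ≤ (0:ℝ), k0 s = 0 := fun s hs => indicator_nonpos _ hs
  have hK0z : ∀ s ≤ (0:ℝ), K0 s = 0 := fun s hs => indicator_nonpos _ hs
  have hu0z : ∀ s ≤ (0:ℝ), u0 s = 0 := fun s hs => indicator_nonpos _ hs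
  have hh1z : ∀ s ≤ (0:ℝ), h1 s = 0 := fun s hs => indicator_nonpos _ hs
  have hw0z : ∀ s ≤ (0:ℝ), w0 s = 0 := fun s hs => indicator_nonpos _ hs
  -- reformulation of the two convolution identities
  have S1 : ∀ᵐ t : ℝ, t ∈ Ioo (0:ℝ) b → cv k0 u0 t = f t := by
    filter_upwards [heq] with t ht hti
    rw [hk0def, hu0def, cv_indicator_eq k u ⟨hti.1, hti.2.le⟩]
    exact ht hti
  have S2 : ∀ᵐ s : ℝ, s ∈ Ioo (0:ℝ) b → cv K0 k0 s = g s := by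
    filter_upwards [hgsc] with t ht hti
    rw [hK0def, hk0def, cv_indicator_eq K k ⟨hti.1, hti.2.le⟩]
    exact ht hti
  -- FTC facts
  have hgFTC : ∀ x ∈ Ioo (0:ℝ) b, g x = χ x + cv χ h1 x := by
    intro x hx
    have hii : IntervalIntegrable (deriv g) volume 0 x := by
      rw [intervalIntegrable_iff_integrableOn_Ioc_of_le hx.1.le]
      exact (integrableOn_Ioc_iff_integrableOn_Ioo).mpr
        (hg'.mono_set (Ioo_subset_Ioo_right hx.2.le))
    have hftc := intervalIntegral.integral_eq_sub_of_hasDerivAt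
      (f := g) (f' := deriv g) (fun s _ => (hg_diff s).hasDerivAt) hii
    have hcv : cv χ h1 x = ∫ s in (0:ℝ)..x, deriv g s := by
      rw [hχdef, hh1def, cv_indicator_eq (fun _ => 1) (deriv g) ⟨hx.1, hx.2.le⟩]
      simp
    rw [hcv, hftc, hg0, hχdef, indicator_of_mem hx]
    ring
  have hfFTC : ∀ x ∈ Ioo (0:ℝ) b, f x = f 0 * χ x + cv χ w0 x := by
    intro x hx
    have hsub : uIcc (0:ℝ) x ⊆ Icc 0 b := by
      rw [uIcc_of_le hx.1.le]
      exact Icc_subset_Icc le_rfl hx.2.le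
    have hii : IntervalIntegrable f' volume 0 x := (hf'.mono hsub).intervalIntegrable
    have hftc := intervalIntegral.integral_eq_sub_of_hasDerivAt
      (f := f) (f' := f') (fun s hs => hf s (hsub hs)) hii
    have hcv : cv χ w0 x = ∫ s in (0:ℝ)..x, f' s := by
      rw [hχdef, hw0def, cv_indicator_eq (fun _ => 1) f' ⟨hx.1, hx.2.le⟩]
      simp
    rw [hcv, hftc, hχdef, indicator_of_mem hx]
    ring
  -- a.e. existence facts
  have cea1 := ae_cea hχi hu0i
  have cea2 := ae_cea hχi (cv_integrable hh1i hu0i)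
  have cea3 := ae_cea (cv_integrable hχi hh1i) hu0i
  have cea4 := ae_cea hK0i hχi
  have cea5 := ae_cea hK0i (cv_integrable hχi hw0i)
  have cea6 := ae_cea hχi hK0i
  have cea7 := ae_cea hχi (cv_integrable hK0i hw0i)
  have assoc1 := cv_assoc hχi hh1i hu0i
  have assoc2 := cv_assoc hK0i hk0i hu0i
  have assoc3 := cv_assoc hK0i hw0i hχi
  set Lf : ℝ → ℝ := fun τ => u0 τ + cv h1 u0 τ with hLfdef
  set Rf : ℝ → ℝ := fun τ => f 0 * K0 τ + cv K0 w0 τ with hRfdef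
  have key : ∀ᵐ t : ℝ, t ∈ Ioo (0:ℝ) b → cv χ Lf t = cv χ Rf t := by
    filter_upwards [cea1, cea2, cea3, cea4, cea5, cea6, cea7, assoc1, assoc2, assoc3]
      with t h1t h2t h3t h4t h5t h6t h7t ha1 ha2 ha3 hti
    have e1 : cv χ Lf t = cv χ u0 t + cv χ (cv h1 u0) t := by
      rw [cv_def]
      have hpt : ∀ s : ℝ, χ s * Lf (t - s) = χ s * u0 (t - s) + χ s * cv h1 u0 (t - s) := by
        intro s; rw [hLfdef]; ring
      simp only [hpt]
      rw [MeasureTheory.integral_add h1t h2t]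
      rfl
    have e2 : cv χ (cv h1 u0) t = cv (cv χ h1) u0 t := ha1.symm
    have e3 : cv χ u0 t + cv (cv χ h1) u0 t = cv g0 u0 t := by
      rw [cv_def χ u0, cv_def _ u0, ← MeasureTheory.integral_add h1t h3t, cv_def]
      refine MeasureTheory.integral_congr_ae (Filter.Eventually.of_forall fun s => ?_)
      dsimp only
      by_cases hs : s ∈ Ioo (0:ℝ) b
      · have hχs : χ s = 1 := indicator_of_mem hs _
        have hg0s : g0 s = g s := indicator_of_mem hs _
        rw [hχs, hg0s, hgFTC s hs, hχs]; ring
      · rcases le_or_gt s 0 with h | h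
        · rw [hχz s h, cv_zero_of_nonpos hχz hh1z h, hg0def, indicator_nonpos _ h]
          ring
        · have hbs : b ≤ s := by
            by_contra hc; exact hs ⟨h, lt_of_not_ge hc⟩
          rw [hu0z (t - s) (by linarith [hti.2])]
          ring
    have e4 : cv g0 u0 t = cv (cv K0 k0) u0 t := by
      rw [cv_def, cv_def]
      refine MeasureTheory.integral_congr_ae ?_
      filter_upwards [S2] with s hs2
      by_cases hs : s ∈ Ioo (0:ℝ) b
      · rw [hs2 hs, hg0def, indicator_of_mem hs]
      · rcases le_or_gt s 0 with h | h
        · rw [cv_zero_of_nonpos hK0z hk0z h, hg0def, indicator_nonpos _ h]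
        · have hbs : b ≤ s := by
            by_contra hc; exact hs ⟨h, lt_of_not_ge hc⟩
          rw [hu0z (t - s) (by linarith [hti.2])]
          ring
    have e5 : cv (cv K0 k0) u0 t = cv K0 (cv k0 u0) t := ha2
    have e6 : cv K0 (cv k0 u0) t = cv K0 f0 t := by
      rw [cv_def, cv_def]
      refine MeasureTheory.integral_congr_ae ?_
      filter_upwards [(MeasureTheory.quasiMeasurePreserving_sub_left_of_right_invariant
        volume t).ae S1] with s hs1
      by_cases hx : t - s ∈ Ioo (0:ℝ) b
      · rw [hs1 hx, hf0def, indicator_of_mem hx]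
      · rcases le_or_gt (t - s) 0 with h | h
        · rw [cv_zero_of_nonpos hk0z hu0z h, hf0def, indicator_nonpos _ h]
        · have hbx : b ≤ t - s := by
            by_contra hc; exact hx ⟨h, lt_of_not_ge hc⟩
          rw [hK0z s (by linarith [hti.2])]
          ring
    have e7 : cv K0 f0 t = f 0 * cv K0 χ t + cv K0 (cv χ w0) t := by
      rw [cv_def K0 f0]
      have hpt : ∀ s : ℝ, K0 s * f0 (t - s)
          = f 0 * (K0 s * χ (t - s)) + K0 s * cv χ w0 (t - s) := by
        intro s
        by_cases hx : t - s ∈ Ioo (0:ℝ) b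
        · rw [hf0def, indicator_of_mem hx, hfFTC (t - s) hx]; ring
        · rcases le_or_gt (t - s) 0 with h | h
          · rw [hf0def, indicator_nonpos _ h, hχz _ h, cv_zero_of_nonpos hχz hw0z h]
            ring
          · have hbx : b ≤ t - s := by
              by_contra hc; exact hx ⟨h, lt_of_not_ge hc⟩
            rw [hK0z s (by linarith [hti.2])]
            ring
      simp only [hpt]
      rw [MeasureTheory.integral_add (h4t.const_mul (f 0)) h5t,
        MeasureTheory.integral_const_mul]
      rfl
    have e8 : f 0 * cv K0 χ t + cv K0 (cv χ w0) t
        = f 0 * cv χ K0 t + cv χ (cv K0 w0) t := by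
      rw [cv_comm K0 χ, cv_comm χ w0, ← ha3, cv_comm (cv K0 w0) χ]
    have e9 : cv χ Rf t = f 0 * cv χ K0 t + cv χ (cv K0 w0) t := by
      rw [cv_def χ Rf]
      have hpt : ∀ s : ℝ, χ s * Rf (t - s)
          = f 0 * (χ s * K0 (t - s)) + χ s * cv K0 w0 (t - s) := by
        intro s; rw [hRfdef]; ring
      simp only [hpt]
      rw [MeasureTheory.integral_add (h6t.const_mul (f 0)) h7t,
        MeasureTheory.integral_const_mul]
      rfl
    rw [e1, e2, e3, e4, e5, e6, e7, e8, ← e9]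
  -- primitives
  have hLz : ∀ s ≤ (0:ℝ), Lf s = 0 := by
    intro s hs
    rw [hLfdef]
    dsimp only
    rw [hu0z s hs, cv_zero_of_nonpos hh1z hu0z hs, add_zero]
  have hRz : ∀ s ≤ (0:ℝ), Rf s = 0 := by
    intro s hs
    rw [hRfdef]
    dsimp only
    rw [hK0z s hs, cv_zero_of_nonpos hK0z hw0z hs, add_zero, mul_zero]
  have hLfi : Integrable Lf := hu0i.add (cv_integrable hh1i hu0i)
  have hRfi : Integrable Rf := (hK0i.const_mul (f 0)).add (cv_integrable hK0i hw0i)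
  have keyPQ : ∀ᵐ t : ℝ, t ∈ Ioo (0:ℝ) b →
      (∫ s in (0:ℝ)..t, Lf s) = ∫ s in (0:ℝ)..t, Rf s := by
    filter_upwards [key] with t hkt hti
    have l1 := cv_one_eq hLz ⟨hti.1, hti.2.le⟩
    have l2 := cv_one_eq hRz ⟨hti.1, hti.2.le⟩
    rw [← hχdef] at l1 l2
    rw [← l1, ← l2]
    exact hkt hti
  have Pc : Continuous fun x : ℝ => ∫ s in (0:ℝ)..x, Lf s := hLfi.continuous_primitive 0
  have Qc : Continuous fun x : ℝ => ∫ s in (0:ℝ)..x, Rf s := hRfi.continuous_primitive 0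
  have hPQ : ∀ t ∈ Ioo (0:ℝ) b, (∫ s in (0:ℝ)..t, Lf s) = ∫ s in (0:ℝ)..t, Rf s := by
    intro t ht
    by_contra hne
    have hop : IsOpen {x : ℝ | (∫ s in (0:ℝ)..x, Lf s) ≠ ∫ s in (0:ℝ)..x, Rf s} :=
      (isClosed_eq Pc Qc).isOpen_compl
    have hpos : 0 < volume (Ioo (0:ℝ) b ∩
        {x : ℝ | (∫ s in (0:ℝ)..x, Lf s) ≠ ∫ s in (0:ℝ)..x, Rf s}) :=
      (isOpen_Ioo.inter hop).measure_pos volume ⟨t, ht, hne⟩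
    have hnull : volume (Ioo (0:ℝ) b ∩
        {x : ℝ | (∫ s in (0:ℝ)..x, Lf s) ≠ ∫ s in (0:ℝ)..x, Rf s}) = 0 := by
      refine measure_mono_null ?_ (MeasureTheory.ae_iff.mp keyPQ)
      intro x hx
      simp only [mem_setOf_eq, Classical.not_imp]
      exact ⟨hx.1, hx.2⟩
    exact hpos.ne' hnull
  set D : ℝ → ℝ := fun x => Lf x - Rf x with hDdef
  have hDi : Integrable D := hLfi.sub hRfi
  have hDprim : ∀ z ∈ Ioo (0:ℝ) b, (∫ s in (0:ℝ)..z, D s) = 0 := by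
    intro z hz
    rw [hDdef]
    rw [intervalIntegral.integral_sub hLfi.intervalIntegrable hRfi.intervalIntegrable,
      hPQ z hz, sub_self]
  have hDball : ∀ x ∈ Ioo (0:ℝ) b, ∀ r : ℝ, 0 < r → r < min x (b - x) →
      (∫ y in Metric.closedBall x r, D y) = 0 := by
    intro x hx r hr hrlt
    have hr1 : r < x := lt_of_lt_of_le hrlt (min_le_left _ _)
    have hr2 : r < b - x := lt_of_lt_of_le hrlt (min_le_right _ _)
    have h1 : x - r ∈ Ioo (0:ℝ) b := ⟨by linarith, by linarith [hx.2]⟩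
    have h2 : x + r ∈ Ioo (0:ℝ) b := ⟨by linarith [hx.1], by linarith⟩
    rw [Real.closedBall_eq_Icc, MeasureTheory.integral_Icc_eq_integral_Ioc,
      ← intervalIntegral.integral_of_le (by linarith : x - r ≤ x + r),
      ← intervalIntegral.integral_interval_sub_left hDi.intervalIntegrable
        hDi.intervalIntegrable,
      hDprim _ h2, hDprim _ h1, sub_zero]
  have hLeb := IsUnifLocDoublingMeasure.ae_tendsto_average (μ := volume)
    hDi.locallyIntegrable 1
  filter_upwards [hLeb] with t hLt hti
  have hr0 : 0 < min t (b - t) := lt_min hti.1 (sub_pos.mpr hti.2)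
  have htend : Tendsto (fun r : ℝ => ⨍ y in Metric.closedBall t r, D y) (𝓝[>] 0)
      (𝓝 (D t)) := by
    refine hLt (fun _ => t) id tendsto_id ?_
    filter_upwards [self_mem_nhdsWithin] with r hr
    exact Metric.mem_closedBall_self (by rw [one_mul]; exact le_of_lt hr)
  have hzero : (fun r : ℝ => ⨍ y in Metric.closedBall t r, D y)
      =ᶠ[𝓝[>] (0:ℝ)] fun _ => 0 := by
    filter_upwards [Ioo_mem_nhdsGT_of_mem (show (0:ℝ) ∈ Ico 0 (min t (b - t)) from
      ⟨le_refl 0, hr0⟩)] with r hr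
    rw [MeasureTheory.setAverage_eq, hDball t hti r hr.1 hr.2, smul_zero]
  have hD0 : D t = 0 := tendsto_nhds_unique (htend.congr' hzero) tendsto_const_nhds
  have hfin : Lf t = Rf t := by
    have := hD0
    rw [hDdef] at this
    exact sub_eq_zero.mp this
  rw [hLfdef, hRfdef] at hfin
  dsimp only at hfin
  rw [hh1def, hu0def, hK0def, hw0def] at hfin
  rw [cv_indicator_eq (deriv g) u ⟨hti.1, hti.2.le⟩,
    cv_indicator_eq K f' ⟨hti.1, hti.2.le⟩,
    indicator_of_mem hti u, indicator_of_mem hti K] at hfin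
  linarith [hfin]
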